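/- For a ∈ ℂ with Im a < 1/2, as s → +∞ on the positive real axis, e^{-is/4} s^{ia/2 + 1/4} v_+(s) → 1, where v_+(s) = (1/Γ(ia/2 + 1/4)) e^{is/4} ∫₀^∞ e^{-ps} p^{ia/2 - 3/4}(1+2ip)^{-ia/2-3/4} dp. -/

import Mathlib

open Complex Filter MeasureTheory

/-- The Laplace-integral solution `v₊(a,s)`. -/
noncomputable def vplus (a s : ℂ) : ℂ :=
  (Complex.Gamma (Complex.I * a / 2 + 1 / 4))⁻¹ * Complex.exp (Complex.I * s / 4) *
    ∫ p in Set.Ioi (0 : ℝ),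
      Complex.exp (-(p : ℂ) * s) * (p : ℂ) ^ (Complex.I * a / 2 - 3 / 4) *
        (1 + 2 * Complex.I * (p : ℂ)) ^ (-Complex.I * a / 2 - 3 / 4)

/-- Uniform bound for the slowly varying factor. -/
lemma norm_factor_le (w : ℂ) (hw : w.re ≤ 0) (p : ℝ) :
    ‖(1 + 2 * Complex.I * (p : ℂ)) ^ w‖ ≤ Real.exp (Real.pi * |w.im|) := by
  set x : ℂ := 1 + 2 * Complex.I * (p : ℂ) with hx
  have hxre : x.re = 1 := by simp [hx]
  have hx0 : x ≠ 0 := fun h => by simp [h] at hxre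
  have h1 : (1 : ℝ) ≤ ‖x‖ := by
    have := Complex.abs_re_le_norm x
    rw [hxre] at this
    simpa using this
  rw [Complex.norm_cpow_of_ne_zero hx0]
  calc ‖x‖ ^ w.re / Real.exp (x.arg * w.im)
      ≤ 1 / Real.exp (x.arg * w.im) := by
        gcongr
        exact Real.rpow_le_one_of_one_le_of_nonpos h1 hw
    _ = Real.exp (-(x.arg * w.im)) := by rw [Real.exp_neg, one_div]
    _ ≤ Real.exp (Real.pi * |w.im|) := by
        apply Real.exp_le_exp.mpr
        calc -(x.arg * w.im) ≤ |x.arg * w.im| := neg_le_abs _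
          _ = |x.arg| * |w.im| := abs_mul _ _
          _ ≤ Real.pi * |w.im| :=
              mul_le_mul_of_nonneg_right (Complex.abs_arg_le_pi x) (abs_nonneg _)

/-- Watson's lemma, leading order: for `Im a < 1/2`, as `s → +∞` along the positive
real axis, `e^{-is/4} s^{ia/2 + 1/4} v₊(a,s) → 1`. -/
theorem vplus_asymptotics (a : ℂ) (ha : a.im < 1 / 2) :
    Tendsto
      (fun s : ℝ =>
        Complex.exp (-Complex.I * (s : ℂ) / 4) *
          (s : ℂ) ^ (Complex.I * a / 2 + 1 / 4) * vplus a (s : ℂ))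
      atTop (nhds 1) := by
  set z : ℂ := Complex.I * a / 2 - 3 / 4 with hz
  set w : ℂ := -Complex.I * a / 2 - 3 / 4 with hw
  have hzre : z.re = -a.im / 2 - 3 / 4 := by simp [hz, Complex.div_re]
  have hwre : w.re = a.im / 2 - 3 / 4 := by simp [hw, Complex.div_re]
  have hz1 : (0:ℝ) < z.re + 1 := by rw [hzre]; linarith
  have hwre0 : w.re ≤ 0 := by rw [hwre]; linarith
  have hz1' : (0:ℝ) < (z + 1).re := by simpa using hz1
  set C : ℝ := Real.exp (Real.pi * |w.im|) with hC
  have hC0 : 0 ≤ C := Real.exp_nonneg _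
  -- the rescaled integrand
  set G : ℝ → ℝ → ℂ := fun s q =>
    Complex.exp (-(q : ℂ)) * (q : ℂ) ^ z * (1 + 2 * Complex.I * ((q / s : ℝ) : ℂ)) ^ w with hG
  -- dominated convergence
  have hlim : Tendsto (fun s : ℝ => ∫ q in Set.Ioi (0:ℝ), G s q) atTop
      (nhds (Complex.GammaIntegral (z + 1))) := by
    have key : Tendsto (fun s : ℝ => ∫ q in Set.Ioi (0:ℝ), G s q) atTop
        (nhds (∫ q in Set.Ioi (0:ℝ), Complex.exp (-(q : ℂ)) * (q : ℂ) ^ z)) := by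
      apply tendsto_integral_filter_of_dominated_convergence
        (bound := fun q => C * (Real.exp (-q) * q ^ z.re))
      · filter_upwards [eventually_gt_atTop (0:ℝ)] with s hs
        apply ContinuousOn.aestronglyMeasurable _ measurableSet_Ioi
        intro q hq
        have hq0 : (0:ℝ) < q := hq
        apply ContinuousWithinAt.mul
        apply ContinuousWithinAt.mul
        · exact ((Complex.continuous_exp.comp
            (Complex.continuous_ofReal.neg)).continuousAt).continuousWithinAt
        · exact ((continuousAt_cpow_const
            (Complex.ofReal_mem_slitPlane.mpr hq0)).comp
            Complex.continuous_ofReal.continuousAt).continuousWithinAt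
        · have hbase : Continuous fun q : ℝ =>
              (1 + 2 * Complex.I * ((q / s : ℝ) : ℂ)) := by continuity
          refine ((continuousAt_cpow_const ?_).comp
            hbase.continuousAt).continuousWithinAt
          apply Complex.mem_slitPlane_iff.mpr
          left; simp
      · filter_upwards [eventually_gt_atTop (0:ℝ)] with s hs
        rw [ae_restrict_iff' measurableSet_Ioi]
        apply ae_of_all
        intro q hq
        have hq0 : (0:ℝ) < q := hq
        rw [hG]
        simp only [norm_mul]
        have h1 : ‖Complex.exp (-(q:ℂ))‖ = Real.exp (-q) := by
          rw [Complex.norm_exp]; norm_num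
        have h2 : ‖(q:ℂ) ^ z‖ = q ^ z.re := by
          rw [Complex.norm_cpow_eq_rpow_re_of_pos hq0]
        rw [h1, h2]
        calc Real.exp (-q) * q ^ z.re * ‖(1 + 2 * Complex.I * ((q / s : ℝ) : ℂ)) ^ w‖
            ≤ Real.exp (-q) * q ^ z.re * C := by
              apply mul_le_mul_of_nonneg_left (norm_factor_le w hwre0 _)
              positivity
          _ = C * (Real.exp (-q) * q ^ z.re) := by ring
      · have := (Real.GammaIntegral_convergent hz1).const_mul C
        simpa [add_sub_cancel_right] using this
      · rw [ae_restrict_iff' measurableSet_Ioi]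
        apply ae_of_all
        intro q hq
        have hq0 : (0:ℝ) < q := hq
        have hq' : Tendsto (fun s : ℝ => ((q / s : ℝ) : ℂ)) atTop (nhds 0) := by
          have : Tendsto (fun s : ℝ => q / s) atTop (nhds 0) :=
            tendsto_const_nhds.div_atTop tendsto_id
          have h := (Complex.continuous_ofReal.tendsto 0).comp this
          simpa only [Function.comp_def, Complex.ofReal_zero] using h
        have hbase : Tendsto (fun s : ℝ => 1 + 2 * Complex.I * ((q / s : ℝ) : ℂ)) atTop
            (nhds 1) := by
          have := (hq'.const_mul (2 * Complex.I)).const_add 1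
          simpa using this
        have hcpow : Tendsto (fun s : ℝ =>
            (1 + 2 * Complex.I * ((q / s : ℝ) : ℂ)) ^ w) atTop (nhds 1) := by
          have hc := (continuousAt_cpow_const
            (b := w) (Complex.one_mem_slitPlane)).tendsto.comp hbase
          simpa [Complex.one_cpow, Function.comp_def] using hc
        have := hcpow.const_mul (Complex.exp (-(q:ℂ)) * (q:ℂ) ^ z)
        simpa [hG, mul_assoc] using this
    convert key using 2
    rw [Complex.GammaIntegral]
    apply setIntegral_congr_fun measurableSet_Ioi
    intro q hq
    simp [Complex.ofReal_exp, add_sub_cancel_right]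
  -- rewrite the target function eventually
  have heq : ∀ᶠ s : ℝ in atTop,
      (Complex.Gamma (z + 1))⁻¹ * ∫ q in Set.Ioi (0:ℝ), G s q
        = Complex.exp (-Complex.I * (s : ℂ) / 4) *
            (s : ℂ) ^ (Complex.I * a / 2 + 1 / 4) * vplus a (s : ℂ) := by
    filter_upwards [eventually_gt_atTop (0:ℝ)] with s hs
    have hs0 : (s : ℂ) ≠ 0 := by exact_mod_cast ne_of_gt hs
    -- substitution p ↦ p * s
    have hsub : (∫ p in Set.Ioi (0:ℝ),
        Complex.exp (-(p : ℂ) * (s:ℂ)) * (p : ℂ) ^ z * (1 + 2 * Complex.I * (p : ℂ)) ^ w)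
        = ((s:ℂ) ^ z)⁻¹ * (s:ℂ)⁻¹ * ∫ q in Set.Ioi (0:ℝ), G s q := by
      have h1 : (∫ p in Set.Ioi (0:ℝ), G s (p * s))
          = s⁻¹ • ∫ q in Set.Ioi ((0:ℝ) * s), G s q :=
        MeasureTheory.integral_comp_mul_right_Ioi (G s) 0 hs
      rw [zero_mul] at h1
      have h2 : (∫ p in Set.Ioi (0:ℝ),
          Complex.exp (-(p : ℂ) * (s:ℂ)) * (p : ℂ) ^ z * (1 + 2 * Complex.I * (p : ℂ)) ^ w)
          = ∫ p in Set.Ioi (0:ℝ), ((s:ℂ) ^ z)⁻¹ * G s (p * s) := by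
        apply setIntegral_congr_fun measurableSet_Ioi
        intro p hp
        have hp0 : (0:ℝ) < p := hp
        rw [hG]
        simp only
        rw [mul_div_cancel_right₀ _ (ne_of_gt hs)]
        have hmul : ((p * s : ℝ) : ℂ) ^ z = (p:ℂ) ^ z * (s:ℂ) ^ z := by
          rw [Complex.ofReal_mul]
          exact Complex.mul_cpow_ofReal_nonneg hp0.le hs.le z
        rw [hmul]
        have hsz : ((s:ℂ) ^ z) ≠ 0 := by
          simp [Complex.cpow_eq_zero_iff, hs0]
        push_cast
        field_simp
      rw [h2, MeasureTheory.integral_const_mul, h1]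
      simp only [smul_eq_mul, Complex.real_smul]
      push_cast
      ring
    rw [vplus]
    have hgamma : Complex.I * a / 2 + 1 / 4 = z + 1 := by rw [hz]; ring
    have hzz : Complex.I * a / 2 - 3 / 4 = z := rfl
    have hww : -Complex.I * a / 2 - 3 / 4 = w := rfl
    rw [hgamma, hzz, hww, hsub]
    have hexp : Complex.exp (-Complex.I * (s:ℂ) / 4) * Complex.exp (Complex.I * (s:ℂ) / 4)
        = 1 := by
      rw [← Complex.exp_add]; ring_nf; exact Complex.exp_zero
    have hpow : (s : ℂ) ^ (z + 1) * (((s:ℂ) ^ z)⁻¹ * (s:ℂ)⁻¹) = 1 := by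
      rw [Complex.cpow_add _ _ hs0, Complex.cpow_one]
      have hsz : ((s:ℂ) ^ z) ≠ 0 := by
        simp [Complex.cpow_eq_zero_iff, hs0]
      field_simp
    calc (Complex.Gamma (z + 1))⁻¹ * ∫ q in Set.Ioi (0:ℝ), G s q
        = (Complex.exp (-Complex.I * (s:ℂ) / 4) * Complex.exp (Complex.I * (s:ℂ) / 4)) *
          ((s : ℂ) ^ (z + 1) * (((s:ℂ) ^ z)⁻¹ * (s:ℂ)⁻¹)) *
          ((Complex.Gamma (z + 1))⁻¹ * ∫ q in Set.Ioi (0:ℝ), G s q) := by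
            rw [hexp, hpow]; ring
      _ = _ := by ring
  have hfinal : Tendsto (fun s : ℝ =>
      (Complex.Gamma (z + 1))⁻¹ * ∫ q in Set.Ioi (0:ℝ), G s q) atTop (nhds 1) := by
    have := hlim.const_mul (Complex.Gamma (z + 1))⁻¹
    have hΓ : Complex.GammaIntegral (z + 1) = Complex.Gamma (z + 1) :=
      (Complex.Gamma_eq_integral hz1').symm
    rw [hΓ] at this
    rwa [inv_mul_cancel₀ (Complex.Gamma_ne_zero_of_re_pos hz1')] at this
  exact hfinal.congr' heq
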